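/- Let p be a homogeneous element of ℤ⟨A,D⟩ of degree n. If p = f(c,d) + A·g(c,d) = f'(c,d) + A·g'(c,d) with f, f' homogeneous cd-polynomials of degree n and g, g' homogeneous cd-polynomials of degree n−1, then f = f' and g = g'. -/

import Mathlib

noncomputable section

abbrev R : Type := MonoidAlgebra ℤ (FreeMonoid Bool)

def A : R := MonoidAlgebra.single (FreeMonoid.of false) 1
def D : R := MonoidAlgebra.single (FreeMonoid.of true) 1
def c : R := A + D
def d : R := A * D + D * A

/-- `p` is homogeneous of degree `n`: every word in its support has length `n`. -/
def Homog (n : ℕ) (p : R) : Prop := ∀ w ∈ p.coeff.support, FreeMonoid.length w = n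

def σ : R →+* R := MonoidAlgebra.mapDomainRingHom ℤ (FreeMonoid.map Bool.not)

lemma σ_single (w : FreeMonoid Bool) (r : ℤ) :
    σ (MonoidAlgebra.single w r) = MonoidAlgebra.single (FreeMonoid.map Bool.not w) r := by
  simp [σ, MonoidAlgebra.mapDomainRingHom, Finsupp.mapDomain_single]

lemma σ_A : σ A = D := by
  simp [σ_single, A, D, FreeMonoid.map_of]

lemma σ_D : σ D = A := by
  simp [σ_single, A, D, FreeMonoid.map_of]

lemma σ_c : σ c = c := by simp [c, map_add, σ_A, σ_D, add_comm]
lemma σ_d : σ d = d := by simp [d, map_add, map_mul, σ_A, σ_D, add_comm]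

lemma σ_fix {x : R} (hx : x ∈ Subring.closure {c, d}) : σ x = x := by
  induction hx using Subring.closure_induction with
  | mem y hy => rcases hy with rfl | rfl; exacts [σ_c, σ_d]
  | one => simp
  | zero => simp
  | add _ _ _ _ h1 h2 => simp [map_add, h1, h2]
  | neg _ _ h => simp [map_neg, h]
  | mul _ _ _ _ h1 h2 => simp [map_mul, h1, h2]

lemma key (h : R) (hh : A * h = D * h) : h = 0 := by
  by_contra hne
  obtain ⟨w, hw⟩ := Finsupp.support_nonempty_iff.2 (mt MonoidAlgebra.coeff_eq_zero.1 hne)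
  have e1 : (A * h).coeff (FreeMonoid.of false * w) = h.coeff w := by
    have := MonoidAlgebra.coeff_single_mul_eq_mul_coeff (m := FreeMonoid.of false)
      (m₁ := FreeMonoid.of false * w) (r := (1:ℤ)) (x := h) w
      (fun a _ => mul_right_inj _)
    simpa [A] using this
  have e2 : (D * h).coeff (FreeMonoid.of false * w) = 0 := by
    apply MonoidAlgebra.single_mul_apply_of_not_exists_mul
    rintro ⟨e, he⟩
    have : (FreeMonoid.of false * w).toList = (FreeMonoid.of true * e).toList := by rw [he]
    simpa [FreeMonoid.toList_of] using congrArg List.head? this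
  rw [hh, e2] at e1
  exact Finsupp.mem_support_iff.1 hw e1.symm

/-- If `p = f + A·g = f' + A·g'` where `f, f'` are homogeneous cd-polynomials of
degree `n` and `g, g'` are homogeneous cd-polynomials of degree `n - 1`, then
`f = f'` and `g = g'`. -/
theorem cd_plus_Acd_unique (n : ℕ) (f f' g g' : R)
    (hf : f ∈ Subring.closure {c, d}) (hf' : f' ∈ Subring.closure {c, d})
    (hg : g ∈ Subring.closure {c, d}) (hg' : g' ∈ Subring.closure {c, d})
    (hfn : Homog n f) (hf'n : Homog n f')
    (hgn : Homog (n - 1) g) (hg'n : Homog (n - 1) g')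
    (heq : f + A * g = f' + A * g') :
    f = f' ∧ g = g' := by
  have h1 : f - f' = A * (g' - g) := by
    rw [mul_sub, sub_eq_sub_iff_add_eq_add, heq]; abel
  have h2 : f - f' = D * (g' - g) := by
    have := congrArg σ h1
    rwa [map_sub, map_mul, σ_fix hf, σ_fix hf', σ_A, map_sub, σ_fix hg', σ_fix hg] at this
  have h3 : g' - g = 0 := key _ (h1.symm.trans h2)
  have hgg : g = g' := (sub_eq_zero.1 h3).symm
  have hff : f = f' := by
    have := h1; rw [h3, mul_zero, sub_eq_zero] at this; exact this
  exact ⟨hff, hgg⟩
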